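/- Let M' = M + N where M satisfies the separability assumption with W ∈ ℝ^{m×r}. If every column n_i of N satisfies ‖n_i‖₂ ≤ ε and ε ≤ σ_r(W)/(2√(r−1))·(1 + 80·K(W)²L/(σ_r(W)²μ))⁻¹, then with ε̄ = ε(1 + 80·K(W)²L/(σ_r²(W)μ)), one has σ_r(W) − √(r−1)·ε̄ ≥ (1/2)σ_r(W); consequently, after any k ≤ r−1 projection steps of the recursive algorithm in which each extracted direction is within ε̄ of a column of W, the remaining projected columns W⁽ᵏ⁾ of W satisfy ω(W⁽ᵏ⁾) ≥ (1/2)σ_r(W) and K(W⁽ᵏ⁾)²/ω(W⁽ᵏ⁾)² ≤ 4K(W)²/σ_r(W)². -/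

import Mathlib

/-- The smallest singular value of the matrix with columns `w i`. -/
noncomputable def sigmaMinE {m r : ℕ} (w : Fin r → EuclideanSpace ℝ (Fin m)) : ℝ :=
  ⨅ x : {x : Fin r → ℝ // ∑ i, x i ^ 2 = 1}, ‖∑ i, x.1 i • w i‖

/-- `ω(W) = min(minᵢ ‖wᵢ‖₂, min_{i≠j} ‖wᵢ − w_j‖₂ / √2)`. -/
noncomputable def omegaE {m r : ℕ} (w : Fin r → EuclideanSpace ℝ (Fin m)) : ℝ :=
  min (⨅ i : Fin r, ‖w i‖)
    ((⨅ p : {p : Fin r × Fin r // p.1 ≠ p.2}, ‖w p.1.1 - w p.1.2‖) / Real.sqrt 2)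

/-- `P = Π_i (I − uᵢuᵢᵀ/‖uᵢ‖²)` applied to a vector. -/
noncomputable def projComp {m k : ℕ} (u : Fin k → EuclideanSpace ℝ (Fin m))
    (v : EuclideanSpace ℝ (Fin m)) : EuclideanSpace ℝ (Fin m) :=
  (List.ofFn fun i : Fin k => fun x : EuclideanSpace ℝ (Fin m) =>
    x - ((inner ℝ (u i) x : ℝ) / ‖u i‖ ^ 2) • u i).foldr (fun g x => g x) v

/- helpers -/

variable {m : ℕ}

lemma step_contract (u x : EuclideanSpace ℝ (Fin m)) :
    ‖x - ((inner ℝ u x : ℝ) / ‖u‖ ^ 2) • u‖ ≤ ‖x‖ := by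
  rcases eq_or_ne u 0 with rfl | hu
  · simp
  have hu2 : (0:ℝ) < ‖u‖ ^ 2 := pow_pos (norm_pos_iff.mpr hu) 2
  have key : ‖x - ((inner ℝ u x : ℝ) / ‖u‖ ^ 2) • u‖ ^ 2 ≤ ‖x‖ ^ 2 := by
    rw [norm_sub_sq_real, real_inner_smul_right, norm_smul]
    have hc : (inner ℝ x u : ℝ) = (inner ℝ u x : ℝ) := real_inner_comm u x
    rw [← hc, Real.norm_eq_abs, mul_pow, sq_abs]
    have h4 : ((inner ℝ x u : ℝ) / ‖u‖ ^ 2) ^ 2 * ‖u‖ ^ 2 = (inner ℝ x u : ℝ)^2 / ‖u‖^2 := by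
      field_simp
    have h6 : ((inner ℝ x u : ℝ) / ‖u‖ ^ 2) * (inner ℝ x u : ℝ) = (inner ℝ x u : ℝ)^2 / ‖u‖^2 := by
      field_simp
    rw [h4, h6]
    have h5 : (0:ℝ) ≤ (inner ℝ x u : ℝ)^2 / ‖u‖^2 := by positivity
    linarith
  have := Real.sqrt_le_sqrt key
  rwa [Real.sqrt_sq (norm_nonneg _), Real.sqrt_sq (norm_nonneg _)] at this

lemma foldr_sub_mem {S : Submodule ℝ (EuclideanSpace ℝ (Fin m))}
    (l : List (EuclideanSpace ℝ (Fin m) → EuclideanSpace ℝ (Fin m)))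
    (h : ∀ g ∈ l, ∀ x, x - g x ∈ S) (v : EuclideanSpace ℝ (Fin m)) :
    v - l.foldr (fun g x => g x) v ∈ S := by
  induction l with
  | nil => simpa using S.zero_mem
  | cons g l ih =>
    have h1 := ih (fun g' hg' => h g' (List.mem_cons_of_mem _ hg')) 
    have h2 := h g (List.mem_cons_self) (l.foldr (fun g x => g x) v)
    have h3 := S.add_mem h1 h2
    rw [sub_add_sub_cancel] at h3
    simpa using h3

lemma foldr_norm_le
    (l : List (EuclideanSpace ℝ (Fin m) → EuclideanSpace ℝ (Fin m)))
    (h : ∀ g ∈ l, ∀ x, ‖g x‖ ≤ ‖x‖) (v : EuclideanSpace ℝ (Fin m)) :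
    ‖l.foldr (fun g x => g x) v‖ ≤ ‖v‖ := by
  induction l with
  | nil => simp
  | cons g l ih =>
    have h1 := ih (fun g' hg' => h g' (List.mem_cons_of_mem _ hg'))
    have h2 := h g (List.mem_cons_self) (l.foldr (fun g x => g x) v)
    calc ‖((g :: l).foldr (fun g x => g x) v)‖ = ‖g (l.foldr (fun g x => g x) v)‖ := by simp
    _ ≤ ‖l.foldr (fun g x => g x) v‖ := h2
    _ ≤ ‖v‖ := h1

variable {m k : ℕ}

lemma projComp_sub_mem (u : Fin k → EuclideanSpace ℝ (Fin m)) (v : EuclideanSpace ℝ (Fin m)) :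
    v - projComp u v ∈ Submodule.span ℝ (Set.range u) := by
  apply foldr_sub_mem
  intro g hg x
  rw [List.mem_ofFn] at hg
  obtain ⟨i, rfl⟩ := hg
  have : x - (x - ((inner ℝ (u i) x : ℝ) / ‖u i‖ ^ 2) • u i)
      = ((inner ℝ (u i) x : ℝ) / ‖u i‖ ^ 2) • u i := by abel
  rw [this]
  exact Submodule.smul_mem _ _ (Submodule.subset_span (Set.mem_range_self i))

lemma projComp_norm_le (u : Fin k → EuclideanSpace ℝ (Fin m)) (v : EuclideanSpace ℝ (Fin m)) :
    ‖projComp u v‖ ≤ ‖v‖ := by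
  apply foldr_norm_le
  intro g hg x
  rw [List.mem_ofFn] at hg
  obtain ⟨i, rfl⟩ := hg
  exact step_contract (u i) x

lemma sigmaMin_le {r : ℕ} (w : Fin r → EuclideanSpace ℝ (Fin m)) (z : Fin r → ℝ) :
    sigmaMinE w * Real.sqrt (∑ i, z i ^ 2) ≤ ‖∑ i, z i • w i‖ := by
  have hz0 : (0:ℝ) ≤ ∑ i, z i ^ 2 := Finset.sum_nonneg fun i _ => sq_nonneg _
  rcases eq_or_lt_of_le hz0 with h0 | hpos
  · rw [← h0, Real.sqrt_zero, mul_zero]; exact norm_nonneg _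
  · set n := Real.sqrt (∑ i, z i ^ 2) with hn
    have hnpos : 0 < n := Real.sqrt_pos.mpr hpos
    have hmem : ∑ i, (z i / n) ^ 2 = 1 := by
      have : ∑ i, (z i / n) ^ 2 = (∑ i, z i ^ 2) / n ^ 2 := by
        rw [Finset.sum_div]; exact Finset.sum_congr rfl fun i _ => by ring
      rw [this, hn, Real.sq_sqrt hz0, div_self hpos.ne']
    have hbdd : BddBelow (Set.range fun x : {x : Fin r → ℝ // ∑ i, x i ^ 2 = 1} =>
        ‖∑ i, x.1 i • w i‖) := ⟨0, by rintro y ⟨x, rfl⟩; exact norm_nonneg _⟩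
    have hle := ciInf_le hbdd (⟨fun i => z i / n, hmem⟩ : {x : Fin r → ℝ // ∑ i, x i ^ 2 = 1})
    have heq : ∑ i, (z i / n) • w i = (n⁻¹ : ℝ) • ∑ i, z i • w i := by
      rw [Finset.smul_sum]
      exact Finset.sum_congr rfl fun i _ => by rw [smul_smul]; congr 1; field_simp
    simp only at hle
    rw [heq, norm_smul, Real.norm_eq_abs, abs_of_pos (inv_pos.mpr hnpos)] at hle
    unfold sigmaMinE
    calc (⨅ x : {x : Fin r → ℝ // ∑ i, x i ^ 2 = 1}, ‖∑ i, x.1 i • w i‖) * n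
        ≤ (n⁻¹ * ‖∑ i, z i • w i‖) * n := mul_le_mul_of_nonneg_right hle hnpos.le
    _ = ‖∑ i, z i • w i‖ := by field_simp

lemma sigmaMin_pos {r : ℕ} (hr : 0 < r) (w : Fin r → EuclideanSpace ℝ (Fin m))
    (hW : LinearIndependent ℝ w) : 0 < sigmaMinE w := by
  classical
  set f : (Fin r → ℝ) → ℝ := fun x => ‖∑ i, x i • w i‖ with hf
  set s : Set (Fin r → ℝ) := {x | ∑ i, x i ^ 2 = 1} with hs
  have hcont : Continuous f :=
    (continuous_finset_sum _ fun i _ => (continuous_apply i).smul continuous_const).norm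
  have hclosed : IsClosed s :=
    isClosed_eq (continuous_finset_sum _ fun i _ => (continuous_apply i).pow 2) continuous_const
  have hbdd : Bornology.IsBounded s := by
    apply Bornology.IsBounded.subset (Metric.isBounded_closedBall (x := (0 : Fin r → ℝ)) (r := 1))
    intro x hx
    rw [Metric.mem_closedBall, dist_zero_right]
    rw [pi_norm_le_iff_of_nonneg zero_le_one]
    intro i
    rw [Real.norm_eq_abs]
    have h1 : x i ^ 2 ≤ 1 := by
      have := Finset.single_le_sum (f := fun j => x j ^ 2)
        (fun j _ => sq_nonneg _) (Finset.mem_univ i)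
      calc x i ^ 2 ≤ ∑ j, x j ^ 2 := this
      _ = 1 := hx
    nlinarith [sq_abs (x i), abs_nonneg (x i)]
  have hcompact : IsCompact s := Metric.isCompact_of_isClosed_isBounded hclosed hbdd
  have hi0 : (⟨0, hr⟩ : Fin r) ∈ Finset.univ := Finset.mem_univ _
  have hx₀ : ((Pi.single (⟨0, hr⟩ : Fin r) (1:ℝ) : Fin r → ℝ)) ∈ s := by
    rw [hs, Set.mem_setOf_eq]
    have : ∀ j : Fin r, ((Pi.single (⟨0, hr⟩ : Fin r) (1:ℝ) : Fin r → ℝ) j)^2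
        = if j = ⟨0, hr⟩ then 1 else 0 := by
      intro j; simp [Pi.single_apply, apply_ite (fun t : ℝ => t^2)]
    rw [Finset.sum_congr rfl fun j _ => this j, Finset.sum_ite_eq' Finset.univ]
    simp
  have hne : s.Nonempty := ⟨_, hx₀⟩
  obtain ⟨x₀m, hx₀m, hmin⟩ := hcompact.exists_isMinOn hne hcont.continuousOn
  have hfpos : 0 < f x₀m := by
    rcases (norm_nonneg (∑ i, x₀m i • w i)).lt_or_eq with h | h
    · exact h
    · exfalso
      have hzero : ∑ i, x₀m i • w i = 0 := by
        rw [← norm_eq_zero]; exact h.symm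
      have := Fintype.linearIndependent_iff.mp hW x₀m hzero
      have : ∑ i, x₀m i ^ 2 = 0 := by
        refine Finset.sum_eq_zero fun i _ => by rw [this i]; ring
      rw [hs] at hx₀m
      simp only [Set.mem_setOf_eq] at hx₀m
      rw [hx₀m] at this
      norm_num at this
  have : Nonempty {x : Fin r → ℝ // ∑ i, x i ^ 2 = 1} := ⟨⟨_, hx₀⟩⟩
  have hge : f x₀m ≤ sigmaMinE w := by
    unfold sigmaMinE
    exact le_ciInf fun x => isMinOn_iff.mp hmin x.1 x.2
  linarith


lemma core {m k : ℕ} (S : Submodule ℝ (EuclideanSpace ℝ (Fin m)))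
    (hS : Module.finrank ℝ S ≤ k)
    (w₂ : Fin k → EuclideanSpace ℝ (Fin m)) (v₀ : EuclideanSpace ℝ (Fin m))
    (σr εb δ : ℝ) (hσ : 0 < σr) (hεb : 0 ≤ εb) (hδ : 0 ≤ δ)
    (hlow : ∀ (a : ℝ) (c : Fin k → ℝ),
      σr * Real.sqrt (a ^ 2 + ∑ j, c j ^ 2) ≤ ‖a • v₀ + ∑ j, c j • w₂ j‖)
    (η₀ : EuclideanSpace ℝ (Fin m)) (hη₀ : ‖η₀‖ ≤ δ) (hv₀ : v₀ - η₀ ∈ S)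
    (η : Fin k → EuclideanSpace ℝ (Fin m)) (hη : ∀ j, ‖η j‖ ≤ εb)
    (hw₂ : ∀ j, w₂ j - η j ∈ S) :
    σr - Real.sqrt k * εb ≤ δ := by
  classical
  set g : Fin (k+1) → S := Fin.cons ⟨v₀ - η₀, hv₀⟩ (fun j => ⟨w₂ j - η j, hw₂ j⟩) with hg
  have hnli : ¬ LinearIndependent ℝ g := by
    intro h
    have := h.fintype_card_le_finrank
    rw [Fintype.card_fin] at this
    omega
  obtain ⟨t, hsum, i, hi⟩ := Fintype.not_linearIndependent_iff.mp hnli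
  set a : ℝ := t 0 with ha
  set c : Fin k → ℝ := fun j => t j.succ with hc
  -- ambient equation
  have hamb : a • (v₀ - η₀) + ∑ j, c j • (w₂ j - η j) = 0 := by
    have h1 := congrArg (Subtype.val : S → EuclideanSpace ℝ (Fin m)) hsum
    push_cast at h1
    rw [Fin.sum_univ_succ] at h1
    simpa [hg, Fin.cons_zero, Fin.cons_succ] using h1
  have heq : a • v₀ + ∑ j, c j • w₂ j = a • η₀ + ∑ j, c j • η j := by
    have h2 : (a • v₀ + ∑ j, c j • w₂ j) - (a • η₀ + ∑ j, c j • η j)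
        = a • (v₀ - η₀) + ∑ j, c j • (w₂ j - η j) := by
      simp only [smul_sub, Finset.sum_sub_distrib]; abel
    rw [← sub_eq_zero, h2]; exact hamb
  set N : ℝ := Real.sqrt (a ^ 2 + ∑ j, c j ^ 2) with hN
  have hcsum : (0:ℝ) ≤ ∑ j, c j ^ 2 := Finset.sum_nonneg fun j _ => sq_nonneg _
  have hNpos : 0 < N := by
    rw [hN, Real.sqrt_pos]
    rcases Fin.eq_zero_or_eq_succ i with rfl | ⟨j, rfl⟩
    · have : 0 < a ^ 2 := by positivity
      linarith
    · have h3 : 0 < c j ^ 2 := by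
        have : c j ≠ 0 := hi
        positivity
      have h4 : c j ^ 2 ≤ ∑ j', c j' ^ 2 :=
        Finset.single_le_sum (f := fun j' => c j' ^ 2) (fun _ _ => sq_nonneg _)
          (Finset.mem_univ j)
      nlinarith [sq_nonneg a]
  have habs : |a| ≤ N := by
    rw [hN, ← Real.sqrt_sq_eq_abs]
    exact Real.sqrt_le_sqrt (by linarith)
  have hcnorm : Real.sqrt (∑ j, c j ^ 2) ≤ N := by
    rw [hN]
    exact Real.sqrt_le_sqrt (by nlinarith [sq_nonneg a])
  have hcs : ∑ j, |c j| ≤ Real.sqrt k * Real.sqrt (∑ j, c j ^ 2) := by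
    have h5 : (∑ j, |c j|) ^ 2 ≤ (k:ℝ) * ∑ j, c j ^ 2 := by
      have := Finset.sum_mul_sq_le_sq_mul_sq Finset.univ (fun _ : Fin k => (1:ℝ))
        (fun j => |c j|)
      simpa [sq_abs] using this
    calc ∑ j, |c j| = Real.sqrt ((∑ j, |c j|) ^ 2) :=
          (Real.sqrt_sq (Finset.sum_nonneg fun j _ => abs_nonneg _)).symm
    _ ≤ Real.sqrt ((k:ℝ) * ∑ j, c j ^ 2) := Real.sqrt_le_sqrt h5
    _ = Real.sqrt k * Real.sqrt (∑ j, c j ^ 2) := Real.sqrt_mul (by positivity) _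
  have hub : ‖a • η₀ + ∑ j, c j • η j‖ ≤ N * δ + Real.sqrt k * εb * N := by
    calc ‖a • η₀ + ∑ j, c j • η j‖ ≤ ‖a • η₀‖ + ‖∑ j, c j • η j‖ := norm_add_le _ _
    _ ≤ |a| * δ + ∑ j, |c j| * εb := by
        apply add_le_add
        · rw [norm_smul, Real.norm_eq_abs]
          exact mul_le_mul_of_nonneg_left hη₀ (abs_nonneg _)
        · refine (norm_sum_le _ _).trans (Finset.sum_le_sum fun j _ => ?_)
          rw [norm_smul, Real.norm_eq_abs]
          exact mul_le_mul_of_nonneg_left (hη j) (abs_nonneg _)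
    _ ≤ N * δ + Real.sqrt k * εb * N := by
        apply add_le_add (mul_le_mul_of_nonneg_right habs hδ)
        rw [← Finset.sum_mul]
        calc (∑ j, |c j|) * εb ≤ (Real.sqrt k * Real.sqrt (∑ j, c j ^ 2)) * εb :=
              mul_le_mul_of_nonneg_right hcs hεb
        _ ≤ (Real.sqrt k * N) * εb := by
              apply mul_le_mul_of_nonneg_right _ hεb
              exact mul_le_mul_of_nonneg_left hcnorm (Real.sqrt_nonneg _)
        _ = Real.sqrt k * εb * N := by ring
  have hmain : σr * N ≤ (δ + Real.sqrt k * εb) * N := by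
    calc σr * N ≤ ‖a • v₀ + ∑ j, c j • w₂ j‖ := hlow a c
    _ = ‖a • η₀ + ∑ j, c j • η j‖ := by rw [heq]
    _ ≤ N * δ + Real.sqrt k * εb * N := hub
    _ = (δ + Real.sqrt k * εb) * N := by ring
  have := le_of_mul_le_mul_right hmain hNpos
  linarith


lemma append_bound {m r₁ k : ℕ} (w₁ : Fin r₁ → EuclideanSpace ℝ (Fin m))
    (w₂ : Fin k → EuclideanSpace ℝ (Fin m)) (x : Fin r₁ → ℝ) (c : Fin k → ℝ) :
    sigmaMinE (Fin.append w₁ w₂) * Real.sqrt ((∑ i, x i ^ 2) + ∑ j, c j ^ 2)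
      ≤ ‖(∑ i, x i • w₁ i) + ∑ j, c j • w₂ j‖ := by
  have h := sigmaMin_le (Fin.append w₁ w₂) (Fin.append x c)
  simpa [Fin.sum_univ_add, Fin.append_left, Fin.append_right] using h


/-- with `ε̄ = ε(1 + 80K(W)²L/(σ_r(W)²μ))` and
`ε ≤ σ_r(W)/(2√(r−1))·(1 + 80K(W)²L/(σ_r(W)²μ))⁻¹`, we have
`σ_r(W) − √(r−1)·ε̄ ≥ σ_r(W)/2`; consequently, after `k ≤ r−1` projection steps in which the
projected extracted columns `w₂` have norm at most `ε̄`, the remaining projected columns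
`W⁽ᵏ⁾ = P w₁` satisfy `ω(W⁽ᵏ⁾) ≥ σ_r(W)/2` and `K(W⁽ᵏ⁾)²/ω(W⁽ᵏ⁾)² ≤ 4K(W)²/σ_r(W)²`. -/
theorem stmt_19 (m r₁ k : ℕ) (hr₁ : 2 ≤ r₁) (hk : k ≤ r₁ + k - 1)
    (μ L ε : ℝ) (hμ : 0 < μ) (hμL : μ ≤ L) (hε0 : 0 ≤ ε)
    (w₁ : Fin r₁ → EuclideanSpace ℝ (Fin m)) (w₂ : Fin k → EuclideanSpace ℝ (Fin m))
    (hW : LinearIndependent ℝ (Fin.append w₁ w₂))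
    (KW σr εb : ℝ)
    (hKW : KW = ⨆ i : Fin (r₁ + k), ‖Fin.append w₁ w₂ i‖)
    (hσ : σr = sigmaMinE (Fin.append w₁ w₂))
    (hεbdef : εb = ε * (1 + 80 * (KW ^ 2 / σr ^ 2) * (L / μ)))
    (hε : ε ≤ σr / (2 * Real.sqrt ((r₁ + k : ℝ) - 1)) *
      (1 + 80 * (KW ^ 2 / σr ^ 2) * (L / μ))⁻¹)
    (u : Fin k → EuclideanSpace ℝ (Fin m)) (hu : ∀ i, u i ≠ 0)
    (hproj : ∀ i : Fin k, ‖projComp u (w₂ i)‖ ≤ εb) :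
    σr / 2 ≤ σr - Real.sqrt ((r₁ + k : ℝ) - 1) * εb ∧
    σr / 2 ≤ omegaE (fun i => projComp u (w₁ i)) ∧
    (⨆ i : Fin r₁, ‖projComp u (w₁ i)‖) ^ 2 / omegaE (fun i => projComp u (w₁ i)) ^ 2 ≤
      4 * KW ^ 2 / σr ^ 2 := by
  have hr : 0 < r₁ + k := by omega
  have hσpos : 0 < σr := hσ ▸ sigmaMin_pos hr _ hW
  have hLμ : 0 < L / μ := div_pos (lt_of_lt_of_le hμ hμL) hμ
  have hKc : (0:ℝ) ≤ KW ^ 2 / σr ^ 2 := by positivity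
  have hcpos : (0:ℝ) < 1 + 80 * (KW ^ 2 / σr ^ 2) * (L / μ) := by nlinarith
  have hεb0 : 0 ≤ εb := by rw [hεbdef]; exact mul_nonneg hε0 hcpos.le
  have hr₁R : (2:ℝ) ≤ (r₁ : ℝ) := by exact_mod_cast hr₁
  have hkR : (0:ℝ) ≤ (k : ℝ) := Nat.cast_nonneg k
  have hrm1 : (1:ℝ) ≤ (r₁ + k : ℝ) - 1 := by push_cast; linarith
  have hsq1 : (1:ℝ) ≤ Real.sqrt ((r₁ + k : ℝ) - 1) := by
    have h := Real.sqrt_le_sqrt hrm1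
    rwa [Real.sqrt_one] at h
  have hsqpos : (0:ℝ) < Real.sqrt ((r₁ + k : ℝ) - 1) := by linarith
  have hεb_le : εb ≤ σr / (2 * Real.sqrt ((r₁ + k : ℝ) - 1)) := by
    rw [hεbdef]
    calc ε * (1 + 80 * (KW ^ 2 / σr ^ 2) * (L / μ))
        ≤ (σr / (2 * Real.sqrt ((r₁ + k : ℝ) - 1)) *
          (1 + 80 * (KW ^ 2 / σr ^ 2) * (L / μ))⁻¹) *
          (1 + 80 * (KW ^ 2 / σr ^ 2) * (L / μ)) :=
          mul_le_mul_of_nonneg_right hε hcpos.le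
    _ = σr / (2 * Real.sqrt ((r₁ + k : ℝ) - 1)) := by
          rw [mul_assoc, inv_mul_cancel₀ hcpos.ne', mul_one]
  have hpart1 : σr / 2 ≤ σr - Real.sqrt ((r₁ + k : ℝ) - 1) * εb := by
    have h1 : Real.sqrt ((r₁ + k : ℝ) - 1) * εb
        ≤ Real.sqrt ((r₁ + k : ℝ) - 1) * (σr / (2 * Real.sqrt ((r₁ + k : ℝ) - 1))) :=
      mul_le_mul_of_nonneg_left hεb_le (Real.sqrt_nonneg _)
    have h2 : Real.sqrt ((r₁ + k : ℝ) - 1) * (σr / (2 * Real.sqrt ((r₁ + k : ℝ) - 1)))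
        = σr / 2 := by field_simp
    linarith
  have hk_le : Real.sqrt k * εb ≤ Real.sqrt ((r₁ + k : ℝ) - 1) * εb := by
    apply mul_le_mul_of_nonneg_right _ hεb0
    apply Real.sqrt_le_sqrt; push_cast; linarith
  have hhalf : σr / 2 ≤ σr - Real.sqrt k * εb := by linarith
  set S := Submodule.span ℝ (Set.range u) with hSdef
  have hS : Module.finrank ℝ S ≤ k := by
    have := finrank_range_le_card (R := ℝ) u
    simpa [Set.finrank, Fintype.card_fin] using this
  have hlow_base : ∀ (x : Fin r₁ → ℝ) (c : Fin k → ℝ),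
      σr * Real.sqrt ((∑ i, x i ^ 2) + ∑ j, c j ^ 2)
        ≤ ‖(∑ i, x i • w₁ i) + ∑ j, c j • w₂ j‖ := by
    intro x c
    rw [hσ]
    exact append_bound w₁ w₂ x c
  have hbound1 : ∀ i : Fin r₁, σr - Real.sqrt k * εb ≤ ‖projComp u (w₁ i)‖ := by
    intro i
    refine core S hS w₂ (w₁ i) σr εb _ hσpos hεb0 (norm_nonneg _) ?_
      (projComp u (w₁ i)) le_rfl (projComp_sub_mem u (w₁ i))
      (fun j => projComp u (w₂ j)) hproj (fun j => projComp_sub_mem u (w₂ j))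
    intro a c
    have hx : ∑ t, (if t = i then a else 0 : ℝ) ^ 2 = a ^ 2 := by
      simp [apply_ite (fun y : ℝ => y ^ 2)]
    have hxs : ∑ t, (if t = i then a else (0:ℝ)) • w₁ t = a • w₁ i := by
      simp [ite_smul]
    have h := hlow_base (fun t => if t = i then a else 0) c
    rw [hx, hxs] at h
    exact h
  have hs2 : (0:ℝ) < Real.sqrt 2 := by positivity
  have hbound2 : ∀ i j : Fin r₁, i ≠ j →
      σr - Real.sqrt k * εb
        ≤ (Real.sqrt 2)⁻¹ * ‖projComp u (w₁ i) - projComp u (w₁ j)‖ := by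
    intro i j hij
    have hδ : ‖(Real.sqrt 2)⁻¹ • (projComp u (w₁ i) - projComp u (w₁ j))‖
        = (Real.sqrt 2)⁻¹ * ‖projComp u (w₁ i) - projComp u (w₁ j)‖ := by
      rw [norm_smul, Real.norm_eq_abs, abs_of_pos (by positivity)]
    rw [← hδ]
    refine core S hS w₂ ((Real.sqrt 2)⁻¹ • (w₁ i - w₁ j)) σr εb _ hσpos hεb0
      (norm_nonneg _) ?_ ((Real.sqrt 2)⁻¹ • (projComp u (w₁ i) - projComp u (w₁ j)))
      le_rfl ?_ (fun j => projComp u (w₂ j)) hproj (fun j => projComp_sub_mem u (w₂ j))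
    · intro a c
      set x : Fin r₁ → ℝ := fun t => (if t = i then a / Real.sqrt 2 else 0)
        + (if t = j then -(a / Real.sqrt 2) else 0) with hxdef
      have hd2 : (a / Real.sqrt 2) ^ 2 = a ^ 2 / 2 := by
        rw [div_pow, Real.sq_sqrt (by norm_num : (0:ℝ) ≤ 2)]
      have hpt : ∀ t, x t ^ 2 = (if t = i then a ^ 2 / 2 else 0)
          + (if t = j then a ^ 2 / 2 else 0) := by
        intro t
        rw [hxdef]
        by_cases h1 : t = i <;> by_cases h2 : t = j
        · exact absurd (h1 ▸ h2) hij
        · simp [h1, h2, hij, hd2]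
        · simp [h1, h2, Ne.symm hij, hd2, neg_sq]
        · simp [h1, h2]
      have hx2 : ∑ t, x t ^ 2 = a ^ 2 := by
        rw [Finset.sum_congr rfl fun t _ => hpt t, Finset.sum_add_distrib]
        simp
        try ring
      have hxs : ∑ t, x t • w₁ t = a • ((Real.sqrt 2)⁻¹ • (w₁ i - w₁ j)) := by
        rw [hxdef]
        simp only [add_smul, ite_smul, zero_smul, neg_smul, Finset.sum_add_distrib,
          Finset.sum_ite_eq', Finset.mem_univ, if_true, Finset.sum_neg_distrib]
        rw [smul_smul, smul_sub]
        rw [show a * (Real.sqrt 2)⁻¹ = a / Real.sqrt 2 from (div_eq_mul_inv a _).symm]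
        abel
      have h := hlow_base x c
      rw [hx2, hxs] at h
      exact h
    · have h1 := projComp_sub_mem u (w₁ i)
      have h2 := projComp_sub_mem u (w₁ j)
      have heq : (Real.sqrt 2)⁻¹ • (w₁ i - w₁ j)
          - (Real.sqrt 2)⁻¹ • (projComp u (w₁ i) - projComp u (w₁ j))
          = (Real.sqrt 2)⁻¹ • ((w₁ i - projComp u (w₁ i)) - (w₁ j - projComp u (w₁ j))) := by
        rw [← smul_sub]; congr 1; abel
      rw [heq]
      exact S.smul_mem _ (S.sub_mem h1 h2)
  have hne1 : Nonempty (Fin r₁) := ⟨⟨0, by omega⟩⟩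
  have hne2 : Nonempty {p : Fin r₁ × Fin r₁ // p.1 ≠ p.2} :=
    ⟨⟨(⟨0, by omega⟩, ⟨1, by omega⟩), by simp [Fin.ext_iff]⟩⟩
  have homega : σr / 2 ≤ omegaE (fun i => projComp u (w₁ i)) := by
    rw [omegaE]
    apply le_min
    · exact le_ciInf fun i => le_trans hhalf (hbound1 i)
    · rw [le_div_iff₀ hs2]
      apply le_ciInf
      intro p
      have h2 : σr / 2 ≤ (Real.sqrt 2)⁻¹ * ‖projComp u (w₁ p.1.1) - projComp u (w₁ p.1.2)‖ :=
        le_trans hhalf (hbound2 p.1.1 p.1.2 p.2)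
      calc σr / 2 * Real.sqrt 2
          ≤ ((Real.sqrt 2)⁻¹ * ‖projComp u (w₁ p.1.1) - projComp u (w₁ p.1.2)‖) * Real.sqrt 2 :=
            mul_le_mul_of_nonneg_right h2 hs2.le
      _ = ‖projComp u (w₁ p.1.1) - projComp u (w₁ p.1.2)‖ := by field_simp
  refine ⟨hpart1, homega, ?_⟩
  have hKp_le : (⨆ i : Fin r₁, ‖projComp u (w₁ i)‖) ≤ KW := by
    apply ciSup_le
    intro i
    calc ‖projComp u (w₁ i)‖ ≤ ‖w₁ i‖ := projComp_norm_le u (w₁ i)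
    _ ≤ KW := by
        rw [hKW]
        have h := le_ciSup (f := fun t : Fin (r₁ + k) => ‖Fin.append w₁ w₂ t‖)
          (Set.Finite.bddAbove (Set.finite_range _)) (Fin.castAdd k i)
        simpa [Fin.append_left] using h
  have hKp0 : 0 ≤ ⨆ i : Fin r₁, ‖projComp u (w₁ i)‖ := by
    have i0 : Fin r₁ := ⟨0, by omega⟩
    exact le_trans (norm_nonneg (projComp u (w₁ i0)))
      (le_ciSup (f := fun i : Fin r₁ => ‖projComp u (w₁ i)‖)
        (Set.Finite.bddAbove (Set.finite_range _)) i0)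
  have h1 : (⨆ i : Fin r₁, ‖projComp u (w₁ i)‖) ^ 2 ≤ KW ^ 2 := pow_le_pow_left₀ hKp0 hKp_le 2
  have h2 : (σr / 2) ^ 2 ≤ omegaE (fun i => projComp u (w₁ i)) ^ 2 :=
    pow_le_pow_left₀ (by positivity) homega 2
  have h3 : (0:ℝ) < (σr / 2) ^ 2 := by positivity
  calc (⨆ i : Fin r₁, ‖projComp u (w₁ i)‖) ^ 2 / omegaE (fun i => projComp u (w₁ i)) ^ 2
      ≤ KW ^ 2 / (σr / 2) ^ 2 := div_le_div₀ (sq_nonneg KW) h1 h3 h2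
  _ = 4 * KW ^ 2 / σr ^ 2 := by field_simp; ring
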